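/- arXiv:1812.07399 — 4 statements merged into one kernel-verified Lean document; each statement's English description precedes it below -/
import Mathlib

section
/- Let z ∈ ℝ², let X_z = {x₁,…,x_N} ⊂ ℝ², and let w = ((w_{1,1},w_{1,2}),…,(w_{N,1},w_{N,2})) be vector weights such that the vector formula ∇̂f(z) := ∑ⱼ (w_{j,1} f(xⱼ), w_{j,2} f(xⱼ)) is exact for the gradient on affine functions: ∑ⱼ wⱼ p(xⱼ) = ∇p(z) for all affine p : ℝ² → ℝ. If f is Lipschitz with constant L on a set Ω containing z and all xⱼ (i.e., |f|_{0,1,Ω} ≤ L), and all segments [z,xⱼ] lie in Ω, then the fault indicator I_∇(z, X_z) := ‖∇̂f(z)‖₂ / ‖∑ⱼ |wⱼ| ‖xⱼ − z‖₂‖₂ satisfies I_∇(z, X_z) ≤ L, where |wⱼ| := (|w_{j,1}|, |w_{j,2}|) and the denominator is the Euclidean norm of the vector ∑ⱼ (|w_{j,1}|, |w_{j,2}|) ‖xⱼ − z‖₂ (assumed nonzero). -/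
open Finset

/-- the fault indicator `I_∇(z,X_z) = ‖∇̂f(z)‖₂ / ‖∑ⱼ |wⱼ| ‖xⱼ−z‖₂‖₂` is
bounded by the Lipschitz constant `L` of `f` on `Ω`, when the vector weights are exact
for the gradient on affine functions. -/
theorem stmt_6 {N : ℕ} (z : EuclideanSpace ℝ (Fin 2)) (x : Fin N → EuclideanSpace ℝ (Fin 2))
    (w : Fin N → EuclideanSpace ℝ (Fin 2)) (f : EuclideanSpace ℝ (Fin 2) → ℝ)
    (Ω : Set (EuclideanSpace ℝ (Fin 2))) (hz : z ∈ Ω) (hx : ∀ j, x j ∈ Ω)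
    (hseg : ∀ j, segment ℝ z (x j) ⊆ Ω)
    (L : ℝ) (hL : 0 ≤ L) (hLip : ∀ u ∈ Ω, ∀ v ∈ Ω, |f u - f v| ≤ L * ‖u - v‖)
    (hexact : ∀ a : ℝ, ∀ b : Fin 2 → ℝ, ∀ m : Fin 2,
      ∑ j, w j m * (a + b 0 * x j 0 + b 1 * x j 1) = b m)
    (num den : EuclideanSpace ℝ (Fin 2))
    (hnum : ∀ m, num m = ∑ j, w j m * f (x j))
    (hden : ∀ m, den m = ∑ j, |w j m| * ‖x j - z‖)
    (hden0 : ‖den‖ ≠ 0) :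
    ‖num‖ / ‖den‖ ≤ L := by
  have hsum0 : ∀ m : Fin 2, ∑ j, w j m = 0 := by
    intro m
    have h := hexact 1 0 m
    simpa using h
  have hcomp : ∀ m : Fin 2, |num m| ≤ L * den m := by
    intro m
    have hnum' : num m = ∑ j, w j m * (f (x j) - f z) := by
      rw [hnum m]
      rw [Finset.sum_congr rfl (fun j _ => by ring :
        ∀ j ∈ Finset.univ, w j m * (f (x j) - f z) = w j m * f (x j) - w j m * f z)] at *
      rw [Finset.sum_sub_distrib, ← Finset.sum_mul, hsum0 m]
      ring
    rw [hnum', hden m, Finset.mul_sum]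
    calc |∑ j, w j m * (f (x j) - f z)| ≤ ∑ j, |w j m * (f (x j) - f z)| :=
          Finset.abs_sum_le_sum_abs _ _
      _ ≤ ∑ j, L * (|w j m| * ‖x j - z‖) := by
          apply Finset.sum_le_sum
          intro j _
          rw [abs_mul]
          have h1 : |f (x j) - f z| ≤ L * ‖x j - z‖ := hLip (x j) (hx j) z hz
          calc |w j m| * |f (x j) - f z| ≤ |w j m| * (L * ‖x j - z‖) := by
                exact mul_le_mul_of_nonneg_left h1 (abs_nonneg _)
            _ = L * (|w j m| * ‖x j - z‖) := by ring
  have hden_nonneg : ∀ m : Fin 2, 0 ≤ den m := by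
    intro m
    rw [hden m]
    exact Finset.sum_nonneg fun j _ => mul_nonneg (abs_nonneg _) (norm_nonneg _)
  have hnorm : ‖num‖ ≤ L * ‖den‖ := by
    rw [EuclideanSpace.norm_eq, EuclideanSpace.norm_eq]
    have : L * Real.sqrt (∑ m, ‖den m‖ ^ 2) = Real.sqrt (∑ m, L^2 * ‖den m‖ ^ 2) := by
      rw [← Finset.mul_sum, Real.sqrt_mul (sq_nonneg L), Real.sqrt_sq hL]
    rw [this]
    apply Real.sqrt_le_sqrt
    apply Finset.sum_le_sum
    intro m _
    have : ‖num m‖ = |num m| := rfl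
    rw [this]
    have h2 : ‖den m‖ = den m := abs_of_nonneg (hden_nonneg m)
    rw [h2]
    calc |num m| ^ 2 ≤ (L * den m) ^ 2 := by
          apply sq_le_sq'
          · linarith [abs_nonneg (num m), hcomp m]
          · exact hcomp m
      _ = L ^ 2 * den m ^ 2 := by ring
  have hpos : 0 < ‖den‖ := lt_of_le_of_ne (norm_nonneg _) (Ne.symm hden0)
  rw [div_le_iff₀ hpos]
  exact hnorm
end

section
/- Let z ∈ ℝ², x₁,…,x_N ∈ ℝ² \ {z}, s > 0, and let λ be a linear functional on affine polynomials. Suppose w* minimizes |w|_{2,s}² = ∑ᵢ wᵢ² ‖xᵢ − z‖₂^{2s} subject to ∑ᵢ wᵢ p(xᵢ) = λ(p) for all affine p. If the centers and target are rescaled by h > 0 via yᵢ = z + h(xᵢ − z) and the functional λ_h(p) := λ(p ∘ T_h) / h^k where T_h(x) = z + h(x − z) and λ is h^k-homogeneous under this substitution (as holds when λ(p) = Dp(z) for D homogeneous of order k with constant coefficients), then the minimizer for the rescaled problem is wᵢ* / h^k. That is, ℓ₂-minimal numerical differentiation formulas are scalable. -/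
/-- scalability of ℓ₂-minimal numerical differentiation formulas. An affine
polynomial is encoded by its coefficients `(a, b)`, i.e. `p(x) = a + b 0 * x 0 + b 1 * x 1`,
and the linear functional `λ` on affine polynomials acts on these coefficients. Under the
rescaling `yᵢ = z + h(xᵢ − z)` and `λ_h(p) := λ(p ∘ T_h)/h^k` (with
`p ∘ T_h` having coefficients `(a + (1−h)(b·z), h b)`), if `w*` minimizes
`∑ wᵢ² ‖xᵢ−z‖^{2s}` subject to exactness for `λ`, then `w*/h^k` minimizes
`∑ wᵢ² ‖yᵢ−z‖^{2s}` subject to exactness for `λ_h` with centers `yᵢ`. -/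
theorem stmt_11 {N : ℕ} (z : EuclideanSpace ℝ (Fin 2)) (x : Fin N → EuclideanSpace ℝ (Fin 2))
    (hxz : ∀ i, x i ≠ z) (s : ℝ) (hs : 0 < s) (k : ℕ)
    (lam : (ℝ × (Fin 2 → ℝ)) →ₗ[ℝ] ℝ)
    (h : ℝ) (hh : 0 < h)
    (y : Fin N → EuclideanSpace ℝ (Fin 2)) (hy : ∀ i, y i = z + h • (x i - z))
    (lamh : ℝ → (Fin 2 → ℝ) → ℝ)
    (hlamh : ∀ a b, lamh a b = lam (a + (1 - h) * (b 0 * z 0 + b 1 * z 1), h • b) / h ^ k)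
    (hhom : ∀ a b, lamh a b = lam (a, b))  -- λ is h^k-homogeneous under the substitution
    (wstar : Fin N → ℝ)
    (hfeas : ∀ a : ℝ, ∀ b : Fin 2 → ℝ,
      ∑ i, wstar i * (a + b 0 * x i 0 + b 1 * x i 1) = lam (a, b))
    (hmin : ∀ w : Fin N → ℝ,
      (∀ a : ℝ, ∀ b : Fin 2 → ℝ, ∑ i, w i * (a + b 0 * x i 0 + b 1 * x i 1) = lam (a, b)) →
      ∑ i, wstar i ^ 2 * ‖x i - z‖ ^ (2 * s) ≤ ∑ i, w i ^ 2 * ‖x i - z‖ ^ (2 * s)) :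
    (∀ a : ℝ, ∀ b : Fin 2 → ℝ,
      ∑ i, (wstar i / h ^ k) * (a + b 0 * y i 0 + b 1 * y i 1) = lamh a b) ∧
    (∀ w : Fin N → ℝ,
      (∀ a : ℝ, ∀ b : Fin 2 → ℝ, ∑ i, w i * (a + b 0 * y i 0 + b 1 * y i 1) = lamh a b) →
      ∑ i, (wstar i / h ^ k) ^ 2 * ‖y i - z‖ ^ (2 * s) ≤
        ∑ i, w i ^ 2 * ‖y i - z‖ ^ (2 * s)) := by
  have hk : (h : ℝ) ^ k ≠ 0 := pow_ne_zero _ hh.ne'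
  have hhne : h ≠ 0 := hh.ne'
  have hyc : ∀ i j, (y i) j = z j + h * ((x i) j - z j) := by
    intro i j
    rw [hy i]
    simp [PiLp.add_apply, PiLp.smul_apply, PiLp.sub_apply, smul_eq_mul]
  have hnorm : ∀ i, ‖y i - z‖ = h * ‖x i - z‖ := by
    intro i
    rw [hy i, add_sub_cancel_left, norm_smul, Real.norm_of_nonneg hh.le]
  constructor
  · intro a b
    rw [hlamh]
    have hf := hfeas (a + (1 - h) * (b 0 * z 0 + b 1 * z 1)) (h • b)
    simp only [Pi.smul_apply, smul_eq_mul] at hf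
    rw [← hf, Finset.sum_div]
    refine Finset.sum_congr rfl fun i _ => ?_
    rw [hyc i 0, hyc i 1, div_mul_eq_mul_div]
    ring_nf
  · intro w hw
    have hwf : ∀ a : ℝ, ∀ b : Fin 2 → ℝ,
        ∑ i, (h ^ k * w i) * (a + b 0 * x i 0 + b 1 * x i 1) = lam (a, b) := by
      intro a b
      have hw' := hw (a - (1 - h) * ((b 0 * z 0 + b 1 * z 1) / h)) ((1/h) • b)
      have hlh := hlamh (a - (1 - h) * ((b 0 * z 0 + b 1 * z 1) / h)) ((1/h) • b)
      rw [hhom] at hlh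
      simp only [Pi.smul_apply, smul_eq_mul] at hw' hlh
      have hb : h • ((1/h) • b) = b := by
        rw [smul_smul]
        field_simp
        simp
      rw [hb] at hlh
      have harg : (a - (1 - h) * ((b 0 * z 0 + b 1 * z 1) / h) +
          (1 - h) * (1 / h * b 0 * z 0 + 1 / h * b 1 * z 1)) = a := by
        field_simp
        ring
      rw [harg] at hlh
      rw [hhom, hlh] at hw'
      have hsum : ∑ i, w i * (a - (1 - h) * ((b 0 * z 0 + b 1 * z 1) / h) +
          1 / h * b 0 * y i 0 + 1 / h * b 1 * y i 1)
          = ∑ i, w i * (a + b 0 * x i 0 + b 1 * x i 1) := by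
        refine Finset.sum_congr rfl fun i _ => ?_
        rw [hyc i 0, hyc i 1]
        field_simp
        ring
      rw [hsum] at hw'
      have : (∑ i, w i * (a + b 0 * x i 0 + b 1 * x i 1)) * h ^ k = lam (a, b) := by
        rw [hw']; field_simp
      rw [← this, Finset.sum_mul]
      refine Finset.sum_congr rfl fun i _ => ?_
      ring
    have hle := hmin (fun i => h ^ k * w i) hwf
    have hA : (0:ℝ) ≤ h ^ (2 * s) := Real.rpow_nonneg hh.le _
    have e1 : ∑ i, (wstar i / h ^ k) ^ 2 * ‖y i - z‖ ^ (2 * s)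
        = (h ^ (2 * s) / (h ^ k) ^ 2) * ∑ i, wstar i ^ 2 * ‖x i - z‖ ^ (2 * s) := by
      rw [Finset.mul_sum]
      refine Finset.sum_congr rfl fun i _ => ?_
      rw [hnorm i, Real.mul_rpow hh.le (norm_nonneg _)]
      generalize h ^ (2 * s) = A
      generalize ‖x i - z‖ ^ (2 * s) = B
      field_simp
    have e2 : ∑ i, w i ^ 2 * ‖y i - z‖ ^ (2 * s)
        = (h ^ (2 * s) / (h ^ k) ^ 2) * ∑ i, (h ^ k * w i) ^ 2 * ‖x i - z‖ ^ (2 * s) := by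
      rw [Finset.mul_sum]
      refine Finset.sum_congr rfl fun i _ => ?_
      rw [hnorm i, Real.mul_rpow hh.le (norm_nonneg _)]
      generalize h ^ (2 * s) = A
      generalize ‖x i - z‖ ^ (2 * s) = B
      field_simp
    rw [e1, e2]
    exact mul_le_mul_of_nonneg_left hle (div_nonneg hA (sq_nonneg _))
end

section
/- Let f : Ω → ℝ with Ω ⊂ ℝ², let r ≥ 1, γ ∈ (0,1], and suppose f is r times continuously differentiable on the convex set Ω with all r-th order partials in C^{0,γ}(Ω). Let z ∈ Ω and let T_{q}f(·; z) denote the Taylor polynomial of f at z of degree r. Then for every x ∈ Ω, |f(x) − T_r f(x; z)| ≤ |f|_{r,γ,Ω} ‖x − z‖₂^{r+γ}, where |f|_{r,γ,Ω} := (1/((γ+1)⋯(γ+r))) (∑_{|α|=r} binom(r,α) |∂^α f|²_{0,γ,Ω})^{1/2} and |g|_{0,γ,Ω} := sup_{x≠y} |g(x)−g(y)|/‖x−y‖₂^γ. -/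
open Finset

/-- Partial derivative of `f : ℝ² → ℝ` in the `i`-th coordinate direction. -/
noncomputable def pdFun (i : Fin 2) (f : EuclideanSpace ℝ (Fin 2) → ℝ) :
    EuclideanSpace ℝ (Fin 2) → ℝ :=
  fun u => fderiv ℝ f u (EuclideanSpace.single i 1)

/-- Iterated partial derivative `∂^α f = ∂₁^{α₁} ∂₂^{α₂} f` for `α = (α₁, α₂)`. -/
noncomputable def pdIter (a : ℕ × ℕ) (f : EuclideanSpace ℝ (Fin 2) → ℝ) :
    EuclideanSpace ℝ (Fin 2) → ℝ :=
  (pdFun 0)^[a.1] ((pdFun 1)^[a.2] f)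

section Aux

abbrev E2 := EuclideanSpace ℝ (Fin 2)

lemma pdFun_contDiffOn {Ω : Set E2} (hopen : IsOpen Ω) {f : E2 → ℝ} {n m : ℕ}
    (hf : ContDiffOn ℝ n f Ω) (hm : m + 1 ≤ n) (i : Fin 2) :
    ContDiffOn ℝ m (pdFun i f) Ω := by
  intro u hu
  have h1 : ContDiffAt ℝ n f u := hf.contDiffAt (hopen.mem_nhds hu)
  have h2 : ContDiffAt ℝ m (fderiv ℝ f) u :=
    h1.fderiv_right (by exact_mod_cast Nat.cast_le.mpr hm)
  exact (((ContinuousLinearMap.apply ℝ ℝ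
    (EuclideanSpace.single i (1:ℝ))).contDiff.contDiffAt).comp u h2).contDiffWithinAt

lemma pdFun_iter_contDiffOn {Ω : Set E2} (hopen : IsOpen Ω) {f : E2 → ℝ} {n k : ℕ}
    (hf : ContDiffOn ℝ n f Ω) (hk : k ≤ n) (i : Fin 2) :
    ContDiffOn ℝ ((n - k : ℕ)) ((pdFun i)^[k] f) Ω := by
  induction k with
  | zero => simpa using hf
  | succ k ih =>
      rw [Function.iterate_succ_apply']
      have h1 : ContDiffOn ℝ ((n - k : ℕ)) ((pdFun i)^[k] f) Ω := ih (by omega)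
      have : (n - (k+1)) + 1 ≤ n - k := by omega
      exact pdFun_contDiffOn hopen h1 this i

lemma pdIter_contDiffOn {Ω : Set E2} (hopen : IsOpen Ω) {f : E2 → ℝ} {n : ℕ} (a : ℕ × ℕ)
    (hf : ContDiffOn ℝ n f Ω) (hk : a.1 + a.2 ≤ n) :
    ContDiffOn ℝ ((n - a.1 - a.2 : ℕ)) (pdIter a f) Ω := by
  have h1 : ContDiffOn ℝ ((n - a.2 : ℕ)) ((pdFun 1)^[a.2] f) Ω :=
    pdFun_iter_contDiffOn hopen hf (by omega) 1
  have h2 : ContDiffOn ℝ ((n - a.2 - a.1 : ℕ)) ((pdFun 0)^[a.1] ((pdFun 1)^[a.2] f)) Ω :=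
    pdFun_iter_contDiffOn hopen h1 (by omega) 0
  have : n - a.2 - a.1 = n - a.1 - a.2 := by omega
  rw [this] at h2
  exact h2

lemma pdFun_congr {Ω : Set E2} (hopen : IsOpen Ω) {w1 w2 : E2 → ℝ}
    (h : Set.EqOn w1 w2 Ω) (i : Fin 2) : Set.EqOn (pdFun i w1) (pdFun i w2) Ω := by
  intro u hu
  have : w1 =ᶠ[nhds u] w2 := Filter.eventuallyEq_of_mem (hopen.mem_nhds hu) h
  simp only [pdFun, this.fderiv_eq]

lemma pd_comm {Ω : Set E2} (hopen : IsOpen Ω) {w : E2 → ℝ} {n : ℕ}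
    (hw : ContDiffOn ℝ n w Ω) (hn : 2 ≤ n) :
    Set.EqOn (pdFun 1 (pdFun 0 w)) (pdFun 0 (pdFun 1 w)) Ω := by
  intro u hu
  have hA : ContDiffAt ℝ 2 w u :=
    (hw.contDiffAt (hopen.mem_nhds hu)).of_le (by exact_mod_cast Nat.cast_le.mpr hn)
  have hsymm : IsSymmSndFDerivAt ℝ w u := hA.isSymmSndFDerivAt (by simp)
  have hd : DifferentiableAt ℝ (fderiv ℝ w) u :=
    (hA.fderiv_right (m := 1) (by norm_num)).differentiableAt (by norm_num)
  have key : ∀ i j : Fin 2, pdFun i (pdFun j w) u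
      = fderiv ℝ (fderiv ℝ w) u (EuclideanSpace.single i 1) (EuclideanSpace.single j 1) := by
    intro i j
    show fderiv ℝ (fun v => fderiv ℝ w v (EuclideanSpace.single j (1:ℝ))) u
        (EuclideanSpace.single i 1) = _
    rw [fderiv_clm_apply hd (differentiableAt_const (EuclideanSpace.single j (1:ℝ)))]
    simp
  rw [key 1 0, key 0 1, hsymm.eq]

lemma pd_comm_iter {Ω : Set E2} (hopen : IsOpen Ω) {v : E2 → ℝ} {n b : ℕ}
    (hv : ContDiffOn ℝ n v Ω) (hb : b + 1 ≤ n) :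
    Set.EqOn (pdFun 1 ((pdFun 0)^[b] v)) ((pdFun 0)^[b] (pdFun 1 v)) Ω := by
  induction b with
  | zero => intro u hu; rfl
  | succ b ih =>
      have hW : ContDiffOn ℝ ((n - b : ℕ)) ((pdFun 0)^[b] v) Ω :=
        pdFun_iter_contDiffOn hopen hv (by omega) 0
      have h1 := pd_comm hopen hW (n := n - b) (by omega)
      have h2 := ih (by omega)
      intro u hu
      rw [Function.iterate_succ_apply', Function.iterate_succ_apply']
      calc pdFun 1 (pdFun 0 ((pdFun 0)^[b] v)) u
          = pdFun 0 (pdFun 1 ((pdFun 0)^[b] v)) u := h1 hu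
        _ = pdFun 0 ((pdFun 0)^[b] (pdFun 1 v)) u := pdFun_congr hopen h2 0 hu

lemma pdIter_succ_left (a1 a2 : ℕ) (f : E2 → ℝ) :
    pdIter (a1 + 1, a2) f = pdFun 0 (pdIter (a1, a2) f) := by
  simp only [pdIter, Function.iterate_succ_apply']

lemma pdIter_succ_right {Ω : Set E2} (hopen : IsOpen Ω) {f : E2 → ℝ} {n : ℕ} (a1 a2 : ℕ)
    (hf : ContDiffOn ℝ n f Ω) (h : a1 + a2 + 1 ≤ n) :
    Set.EqOn (pdFun 1 (pdIter (a1, a2) f)) (pdIter (a1, a2 + 1) f) Ω := by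
  have hV : ContDiffOn ℝ ((n - a2 : ℕ)) ((pdFun 1)^[a2] f) Ω :=
    pdFun_iter_contDiffOn hopen hf (by omega) 1
  intro u hu
  have := pd_comm_iter hopen hV (b := a1) (by omega) hu
  simp only [pdIter] at this ⊢
  rw [this, Function.iterate_succ_apply' (pdFun 1) a2 f]

lemma pascal_sum (k : ℕ) (B : ℕ → ℝ) :
    ∑ j ∈ range (k+1), (k.choose j : ℝ) * (B (j+1) + B j)
      = ∑ i ∈ range (k+2), ((k+1).choose i : ℝ) * B i := by
  have hL : ∑ j ∈ range (k+1), (k.choose j : ℝ) * (B (j+1) + B j)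
      = (∑ j ∈ range (k+1), (k.choose j : ℝ) * B (j+1))
        + ∑ j ∈ range (k+1), (k.choose j : ℝ) * B j := by
    rw [← Finset.sum_add_distrib]; exact Finset.sum_congr rfl fun j _ => by ring
  have hmid : ∑ j ∈ range (k+1), (k.choose j : ℝ) * B j
      = (∑ i ∈ range (k+1), (k.choose (i+1) : ℝ) * B (i+1)) + B 0 := by
    have h2 := Finset.sum_range_succ' (fun j => (k.choose j : ℝ) * B j) (k+1)
    rw [Finset.sum_range_succ (fun j => (k.choose j : ℝ) * B j) (k+1)] at h2
    simp only [Nat.choose_succ_self, Nat.cast_zero, zero_mul, add_zero,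
      Nat.choose_zero_right, Nat.cast_one, one_mul] at h2
    exact h2
  have hR : ∑ i ∈ range (k+2), ((k+1).choose i : ℝ) * B i
      = (∑ i ∈ range (k+1), ((k+1).choose (i+1) : ℝ) * B (i+1)) + B 0 := by
    rw [Finset.sum_range_succ' (fun i => ((k+1).choose i : ℝ) * B i) (k+1)]
    simp
  have hsplit : ∑ i ∈ range (k+1), ((k+1).choose (i+1) : ℝ) * B (i+1)
      = (∑ j ∈ range (k+1), (k.choose j : ℝ) * B (j+1))
        + ∑ i ∈ range (k+1), (k.choose (i+1) : ℝ) * B (i+1) := by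
    rw [← Finset.sum_add_distrib]
    refine Finset.sum_congr rfl fun i _ => ?_
    rw [Nat.choose_succ_succ]; push_cast; ring
  rw [hL, hmid, hR, hsplit]; ring

lemma sum_pairs_eq (r k : ℕ) (hk : k ≤ r) (F : ℕ × ℕ → ℝ) :
    ∑ a ∈ (Finset.range (r + 1) ×ˢ Finset.range (r + 1)).filter (fun a => a.1 + a.2 = k), F a
      = ∑ j ∈ range (k+1), F (j, k - j) := by
  refine Finset.sum_nbij' (i := fun a => a.1) (j := fun j => (j, k - j)) ?_ ?_ ?_ ?_ ?_
  · intro a ha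
    simp only [Finset.mem_filter, Finset.mem_product, Finset.mem_range] at ha
    simp only [Finset.mem_range]; omega
  · intro j hj
    simp only [Finset.mem_range] at hj
    simp only [Finset.mem_filter, Finset.mem_product, Finset.mem_range]; omega
  · intro a ha
    simp only [Finset.mem_filter, Finset.mem_product, Finset.mem_range] at ha
    have : k - a.1 = a.2 := by omega
    simp [this]
  · intro j hj; rfl
  · intro a ha
    simp only [Finset.mem_filter, Finset.mem_product, Finset.mem_range] at ha
    have h2 : k - a.1 = a.2 := by omega
    simp [h2]

lemma rpow_cont (γ : ℝ) (hγ : 0 < γ) : Continuous (fun t : ℝ => t ^ γ) := by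
  rw [continuous_iff_continuousAt]
  exact fun t => Real.continuousAt_rpow_const t γ (Or.inr hγ.le)

lemma beta_eval (n : ℕ) : ∀ γ : ℝ, 0 < γ →
    ∫ t in (0:ℝ)..1, t ^ γ * (1 - t) ^ n
      = (n.factorial : ℝ) / ∏ i ∈ range (n+1), (γ + 1 + i) := by
  induction n with
  | zero =>
      intro γ hγ
      simp only [pow_zero, mul_one, Nat.factorial_zero, Nat.cast_one]
      rw [integral_rpow (Or.inl (by linarith))]
      rw [Real.one_rpow, Real.zero_rpow (by linarith)]
      norm_num
  | succ n ih =>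
      intro γ hγ
      have hne : γ + 1 ≠ 0 := by linarith
      have hv : ∀ t ∈ Set.uIcc (0:ℝ) 1,
          HasDerivAt (fun t : ℝ => t ^ (γ+1) / (γ+1)) (t ^ γ) t := by
        intro t _
        have := (Real.hasDerivAt_rpow_const (x := t) (p := γ+1)
          (Or.inr (by linarith))).div_const (γ+1)
        have h2 : γ + 1 - 1 = γ := by ring
        rw [h2] at this
        rwa [mul_div_cancel_left₀ _ hne] at this
      have hu : ∀ t ∈ Set.uIcc (0:ℝ) 1,
          HasDerivAt (fun t : ℝ => (1 - t) ^ (n+1))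
            (-((n+1 : ℝ) * (1 - t) ^ n)) t := by
        intro t _
        have h1 : HasDerivAt (fun t : ℝ => 1 - t) (-1) t := (hasDerivAt_id t).const_sub 1
        have := h1.pow (n+1)
        exact this.congr_deriv (by simp)
      have hiu : IntervalIntegrable (fun t : ℝ => -((n+1 : ℝ) * (1 - t) ^ n))
          MeasureTheory.volume 0 1 :=
        (Continuous.intervalIntegrable (by continuity) 0 1)
      have hiv : IntervalIntegrable (fun t : ℝ => t ^ γ) MeasureTheory.volume 0 1 :=
        ((rpow_cont γ hγ).intervalIntegrable 0 1)
      have ibp := intervalIntegral.integral_mul_deriv_eq_deriv_mul hu hv hiu hiv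
      have e1 : ∫ t in (0:ℝ)..1, t ^ γ * (1 - t) ^ (n+1)
          = ∫ t in (0:ℝ)..1, (1 - t) ^ (n+1) * t ^ γ := by
        congr 1; ext t; ring
      have e2 : ∫ t in (0:ℝ)..1, -((n+1:ℝ) * (1 - t) ^ n) * (t ^ (γ+1) / (γ+1))
          = -((n+1:ℝ)/(γ+1)) * ∫ t in (0:ℝ)..1, t ^ (γ+1) * (1 - t) ^ n := by
        rw [← intervalIntegral.integral_const_mul]
        congr 1; ext t; field_simp
      rw [e1, ibp, e2, ih (γ+1) (by linarith)]
      have hprod : ∏ i ∈ range (n+2), (γ + 1 + i)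
          = (∏ i ∈ range (n+1), (γ + 1 + 1 + i)) * (γ + 1) := by
        rw [Finset.prod_range_succ' (fun i => (γ + 1 + i)) (n+1)]
        push_cast; ring_nf
      have hpos : (0:ℝ) < ∏ i ∈ range (n+1), (γ + 1 + 1 + i) := by
        apply Finset.prod_pos; intro i _; positivity
      rw [hprod]
      simp only [Real.one_rpow, Real.zero_rpow hne]
      push_cast [Nat.factorial_succ]
      field_simp
      ring

end Aux

set_option maxHeartbeats 2000000 in
/-- Taylor remainder estimate in the Hölder seminorm. If `f ∈ C^r` on the
convex open set `Ω` and each `r`-th order partial `∂^α f` is `γ`-Hölder with constant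
`L α`, then `|f(x) − T_r f(x;z)| ≤ |f|_{r,γ,Ω} ‖x−z‖^{r+γ}`, where
`|f|_{r,γ,Ω} = (1/((γ+1)⋯(γ+r))) (∑_{|α|=r} binom(r,α) (L α)²)^{1/2}`. -/
theorem stmt_13 (Ω : Set (EuclideanSpace ℝ (Fin 2))) (hopen : IsOpen Ω) (hconv : Convex ℝ Ω)
    (f : EuclideanSpace ℝ (Fin 2) → ℝ) (r : ℕ) (hr : 1 ≤ r) (γ : ℝ) (hγ : 0 < γ) (hγ1 : γ ≤ 1)
    (hf : ContDiffOn ℝ r f Ω) (z : EuclideanSpace ℝ (Fin 2)) (hz : z ∈ Ω)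
    (L : ℕ × ℕ → ℝ) (hL0 : ∀ a, 0 ≤ L a)
    (hHolder : ∀ a : ℕ × ℕ, a.1 + a.2 = r →
      ∀ u ∈ Ω, ∀ v ∈ Ω, |pdIter a f u - pdIter a f v| ≤ L a * ‖u - v‖ ^ γ) :
    ∀ x ∈ Ω,
      |f x - ∑ a ∈ (Finset.range (r + 1) ×ˢ Finset.range (r + 1)).filter
            (fun a => a.1 + a.2 ≤ r),
          pdIter a f z * (x 0 - z 0) ^ a.1 * (x 1 - z 1) ^ a.2 /
            (a.1.factorial * a.2.factorial)| ≤
        (1 / ∏ i ∈ Finset.range r, (γ + i + 1)) *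
          Real.sqrt (∑ a ∈ (Finset.range (r + 1) ×ˢ Finset.range (r + 1)).filter
              (fun a => a.1 + a.2 = r), (r.choose a.1 : ℝ) * L a ^ 2) *
          ‖x - z‖ ^ ((r : ℝ) + γ) := by
  intro x hx
  set φ : ℝ → EuclideanSpace ℝ (Fin 2) := fun t => z + t • (x - z) with hφdef
  have hφ0 : φ 0 = z := by simp [hφdef]
  have hφ1 : φ 1 = x := by simp [hφdef]
  have hφmem : ∀ t ∈ Set.Icc (0:ℝ) 1, φ t ∈ Ω := by
    intro t ht
    have he : φ t = (1 - t) • z + t • x := by simp only [hφdef]; module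
    rw [he]; exact hconv hz hx (by linarith [ht.2]) ht.1 (by ring)
  set h0 : ℝ := x 0 - z 0 with hh0
  set h1 : ℝ := x 1 - z 1 with hh1
  have hsub0 : (x - z) 0 = h0 := rfl
  have hsub1 : (x - z) 1 = h1 := rfl
  set A : ℕ → ℕ → ℝ → ℝ := fun b1 b2 t => pdIter (b1, b2) f (φ t) with hAdef
  set G : ℕ → ℝ → ℝ :=
    fun k t => ∑ j ∈ range (k+1), (k.choose j : ℝ) * A j (k-j) t * h0^j * h1^(k-j) with hGdef
  -- derivative of A
  have hAderiv : ∀ b1 b2 : ℕ, b1 + b2 + 1 ≤ r → ∀ t ∈ Set.Icc (0:ℝ) 1,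
      HasDerivAt (A b1 b2) (h0 * A (b1+1) b2 t + h1 * A b1 (b2+1) t) t := by
    intro b1 b2 hb t ht
    have hmem := hφmem t ht
    have hw : ContDiffOn ℝ ((r - b1 - b2 : ℕ)) (pdIter (b1,b2) f) Ω :=
      pdIter_contDiffOn hopen (b1,b2) hf (by omega)
    have hdiff : DifferentiableAt ℝ (pdIter (b1,b2) f) (φ t) :=
      (hw.contDiffAt (hopen.mem_nhds hmem)).differentiableAt
        (by exact_mod_cast (show r - b1 - b2 ≠ 0 by omega))
    have hφd : HasDerivAt φ (x - z) t := by
      have := ((hasDerivAt_id t).smul_const (x - z)).const_add z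
      rw [one_smul] at this; exact this
    have hcomp := hdiff.hasFDerivAt.comp_hasDerivAt t hφd
    have hdecomp : (x - z) = h0 • EuclideanSpace.single 0 (1:ℝ)
        + h1 • EuclideanSpace.single 1 (1:ℝ) := by
      ext i
      fin_cases i <;>
        simp [EuclideanSpace.single_apply, hh0, hh1]
    have hval : fderiv ℝ (pdIter (b1,b2) f) (φ t) (x - z)
        = h0 * A (b1+1) b2 t + h1 * A b1 (b2+1) t := by
      rw [hdecomp, map_add, map_smul, map_smul]
      have e0 : fderiv ℝ (pdIter (b1,b2) f) (φ t) (EuclideanSpace.single 0 1)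
          = A (b1+1) b2 t := by
        show pdFun 0 (pdIter (b1,b2) f) (φ t) = _
        rw [← pdIter_succ_left]
      have e1 : fderiv ℝ (pdIter (b1,b2) f) (φ t) (EuclideanSpace.single 1 1)
          = A b1 (b2+1) t := by
        show pdFun 1 (pdIter (b1,b2) f) (φ t) = _
        exact pdIter_succ_right hopen b1 b2 hf (by omega) hmem
      rw [e0, e1]; simp [smul_eq_mul]
    rw [hval] at hcomp
    exact hcomp
  -- derivative of G
  have hGderiv : ∀ k : ℕ, k + 1 ≤ r → ∀ t ∈ Set.Icc (0:ℝ) 1,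
      HasDerivAt (G k) (G (k+1) t) t := by
    intro k hk t ht
    have hsum : HasDerivAt (G k)
        (∑ j ∈ range (k+1), (k.choose j : ℝ)
          * (h0 * A (j+1) (k-j) t + h1 * A j (k-j+1) t) * h0^j * h1^(k-j)) t := by
      apply HasDerivAt.fun_sum
      intro j hj
      have hj' : j ≤ k := by simp only [Finset.mem_range] at hj; omega
      exact (((hAderiv j (k-j) (by omega) t ht).const_mul
        ((k.choose j : ℝ))).mul_const (h0^j)).mul_const (h1^(k-j))
    convert hsum using 1
    have hps := pascal_sum k (fun i => A i (k+1-i) t * h0^i * h1^(k+1-i))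
    have hG1 : G (k+1) t = ∑ i ∈ range (k+2),
        ((k+1).choose i : ℝ) * (A i (k+1-i) t * h0^i * h1^(k+1-i)) := by
      simp only [hGdef]
      exact Finset.sum_congr rfl fun i _ => by ring
    rw [hG1, ← hps]
    apply Finset.sum_congr rfl
    intro j hj
    have hj' : j ≤ k := by simp only [Finset.mem_range] at hj; omega
    have e1 : k + 1 - (j+1) = k - j := by omega
    have e2 : k + 1 - j = (k - j) + 1 := by omega
    simp only [e1, e2]
    ring
  -- continuity of G k
  have hφc : Continuous φ := by
    apply continuous_const.add
    exact continuous_id.smul continuous_const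
  have hGcont : ∀ k, k ≤ r → ContinuousOn (G k) (Set.Icc (0:ℝ) 1) := by
    intro k hk
    simp only [hGdef]
    apply continuousOn_finset_sum
    intro j hj
    have hj' : j ≤ k := by simp only [Finset.mem_range] at hj; omega
    have hpc : ContinuousOn (pdIter (j, k-j) f) Ω :=
      (pdIter_contDiffOn hopen (j, k-j) hf (by omega)).continuousOn
    have hac : ContinuousOn (A j (k-j)) (Set.Icc (0:ℝ) 1) :=
      hpc.comp hφc.continuousOn (fun t ht => hφmem t ht)
    exact ((continuousOn_const.mul hac).mul continuousOn_const).mul continuousOn_const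
  -- P and its derivative
  set u : ℕ → ℝ → ℝ :=
    fun k t => G k t * ((k:ℝ) * (1-t)^(k-1)) / (k.factorial : ℝ) with hudef
  set P : ℝ → ℝ := fun t => ∑ k ∈ range r, G k t * (1-t)^k / (k.factorial : ℝ) with hPdef
  have hPderiv : ∀ t ∈ Set.Icc (0:ℝ) 1, HasDerivAt P (u r t) t := by
    intro t ht
    have hsum : HasDerivAt P (∑ k ∈ range r, (u (k+1) t - u k t)) t := by
      apply HasDerivAt.fun_sum
      intro k hk
      have hk' : k + 1 ≤ r := by simp only [Finset.mem_range] at hk; omega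
      have hpow : HasDerivAt (fun s:ℝ => (1-s)^k) ((k:ℝ) * (1-t)^(k-1) * (-1)) t :=
        ((hasDerivAt_id t).const_sub 1).pow k
      have hmul := ((hGderiv k hk' t ht).mul hpow).div_const (k.factorial : ℝ)
      refine hmul.congr_deriv ?_; symm
      simp only [hudef]
      simp only [Nat.factorial_succ, Nat.add_sub_cancel]
      have hkf : (k.factorial : ℝ) ≠ 0 := Nat.cast_ne_zero.mpr k.factorial_ne_zero
      push_cast
      field_simp
      ring
    rw [Finset.sum_range_sub (fun k => u k t)] at hsum
    have hu0 : u 0 t = 0 := by simp only [hudef]; simp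
    rw [hu0, sub_zero] at hsum
    exact hsum
  have hIcc : Set.uIcc (0:ℝ) 1 = Set.Icc (0:ℝ) 1 := Set.uIcc_of_le zero_le_one
  have hurint : IntervalIntegrable (u r) MeasureTheory.volume 0 1 := by
    apply ContinuousOn.intervalIntegrable
    rw [hIcc, hudef]
    exact ((hGcont r le_rfl).mul (by fun_prop)).div_const _
  have hFTC : ∫ t in (0:ℝ)..1, u r t = P 1 - P 0 := by
    apply intervalIntegral.integral_eq_sub_of_hasDerivAt
    · intro t ht
      rw [hIcc] at ht
      exact hPderiv t ht
    · exact hurint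
  -- P 1 = f x
  have hP1 : P 1 = f x := by
    simp only [hPdef]
    rw [Finset.sum_eq_single_of_mem 0 (Finset.mem_range.mpr (by omega))]
    · simp only [pow_zero, Nat.factorial_zero, Nat.cast_one, mul_one, div_one]
      simp only [hGdef]
      simp only [Nat.choose_self, zero_add, Finset.sum_range_one, Nat.choose_zero_right,
        Nat.cast_one, one_mul, pow_zero, mul_one, Nat.zero_sub]
      simp only [hAdef]
      simp only [hφ1]
      rfl
    · intro k _ hk0
      simp only [sub_self, zero_pow hk0, mul_zero, zero_div]
  -- the Taylor polynomial equals P 0 + G r 0 / r!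
  have hGzero : ∀ k, k ≤ r → G k 0 / (k.factorial : ℝ)
      = ∑ j ∈ range (k+1), pdIter (j, k-j) f z * h0^j * h1^(k-j)
          / ((j.factorial : ℝ) * ((k-j).factorial : ℝ)) := by
    intro k hk
    simp only [hGdef]
    rw [Finset.sum_div]
    apply Finset.sum_congr rfl
    intro j hj
    have hj' : j ≤ k := by simp only [Finset.mem_range] at hj; omega
    have hA0 : A j (k-j) 0 = pdIter (j, k-j) f z := by simp only [hAdef]; simp [hφ0]
    rw [hA0]
    have hcf : (k.choose j : ℝ) * ((j.factorial : ℝ) * ((k-j).factorial : ℝ))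
        = (k.factorial : ℝ) := by
      rw [← Nat.cast_mul, ← Nat.cast_mul, ← mul_assoc]
      exact_mod_cast congrArg (Nat.cast (R := ℝ))
        (Nat.choose_mul_factorial_mul_factorial hj')
    have hf1 : ((j.factorial : ℝ) * ((k-j).factorial : ℝ)) ≠ 0 := by positivity
    have hf2 : (k.factorial : ℝ) ≠ 0 := by positivity
    field_simp
    rw [← hcf]
    ring
  have hTaylor : ∑ a ∈ (Finset.range (r + 1) ×ˢ Finset.range (r + 1)).filter
        (fun a => a.1 + a.2 ≤ r),
        pdIter a f z * (x 0 - z 0) ^ a.1 * (x 1 - z 1) ^ a.2 /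
          ((a.1.factorial : ℝ) * (a.2.factorial : ℝ))
      = P 0 + G r 0 / (r.factorial : ℝ) := by
    have hmaps : ∀ a ∈ (Finset.range (r + 1) ×ˢ Finset.range (r + 1)).filter
        (fun a => a.1 + a.2 ≤ r), a.1 + a.2 ∈ range (r+1) := by
      intro a ha
      simp only [Finset.mem_filter] at ha
      simp only [Finset.mem_range]; omega
    rw [← Finset.sum_fiberwise_of_maps_to hmaps]
    have hfib : ∀ k ∈ range (r+1),
        (((Finset.range (r + 1) ×ˢ Finset.range (r + 1)).filter
          (fun a => a.1 + a.2 ≤ r)).filter (fun a => a.1 + a.2 = k))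
        = (Finset.range (r + 1) ×ˢ Finset.range (r + 1)).filter (fun a => a.1 + a.2 = k) := by
      intro k hk
      simp only [Finset.mem_range] at hk
      rw [Finset.filter_filter]
      apply Finset.filter_congr
      intro a _
      constructor
      · exact fun hh => hh.2
      · exact fun hh => ⟨by omega, hh⟩
    rw [Finset.sum_congr rfl (fun k hk => by rw [hfib k hk])]
    have hstep : ∀ k ∈ range (r+1),
        ∑ a ∈ (Finset.range (r + 1) ×ˢ Finset.range (r + 1)).filter (fun a => a.1 + a.2 = k),
          pdIter a f z * (x 0 - z 0) ^ a.1 * (x 1 - z 1) ^ a.2 /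
            ((a.1.factorial : ℝ) * (a.2.factorial : ℝ))
        = G k 0 / (k.factorial : ℝ) := by
      intro k hk
      simp only [Finset.mem_range] at hk
      rw [sum_pairs_eq r k (by omega), hGzero k (by omega)]
    rw [Finset.sum_congr rfl hstep, Finset.sum_range_succ]
    simp [hPdef]
  -- key representation of remainder
  have hconst_int : ∫ t in (0:ℝ)..1, G r 0 * ((r:ℝ) * (1-t)^(r-1)) / (r.factorial : ℝ)
      = G r 0 / (r.factorial : ℝ) := by
    have hpowint : ∫ t in (0:ℝ)..1, (1-t)^(r-1) = 1/(r:ℝ) := by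
      rw [intervalIntegral.integral_comp_sub_left (fun s => s^(r-1)) 1]
      simp only [sub_zero, sub_self]
      rw [integral_pow]
      have h2 : r - 1 + 1 = r := by omega
      rw [h2, one_pow, zero_pow (by omega : r ≠ 0), Nat.cast_sub hr]
      push_cast
      ring_nf
    have : (fun t : ℝ => G r 0 * ((r:ℝ) * (1-t)^(r-1)) / (r.factorial : ℝ))
        = fun t : ℝ => (G r 0 * (r:ℝ) / (r.factorial : ℝ)) * (1-t)^(r-1) := by
      ext t; ring
    rw [this, intervalIntegral.integral_const_mul, hpowint]
    have hrne : (r:ℝ) ≠ 0 := Nat.cast_ne_zero.mpr (by omega)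
    field_simp
  have hconstint' : IntervalIntegrable
      (fun t : ℝ => G r 0 * ((r:ℝ) * (1-t)^(r-1)) / (r.factorial : ℝ))
      MeasureTheory.volume 0 1 := (Continuous.intervalIntegrable (by fun_prop) 0 1)
  have hrem : f x - (P 0 + G r 0 / (r.factorial : ℝ))
      = ∫ t in (0:ℝ)..1,
          (G r t - G r 0) * ((r:ℝ) * (1-t)^(r-1)) / (r.factorial : ℝ) := by
    have : ∫ t in (0:ℝ)..1, (G r t - G r 0) * ((r:ℝ) * (1-t)^(r-1)) / (r.factorial : ℝ)
        = (∫ t in (0:ℝ)..1, u r t)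
          - ∫ t in (0:ℝ)..1, G r 0 * ((r:ℝ) * (1-t)^(r-1)) / (r.factorial : ℝ) := by
      rw [← intervalIntegral.integral_sub hurint hconstint']
      apply intervalIntegral.integral_congr
      intro t _
      simp only [hudef]
      ring
    rw [this, hFTC, hP1, hconst_int]
    ring
  -- Hölder bound on G r t - G r 0
  set C : ℝ := ∑ j ∈ range (r+1), (r.choose j : ℝ) * L (j, r-j) * |h0|^j * |h1|^(r-j)
    with hCdef
  have hC0 : 0 ≤ C := by
    rw [hCdef]
    apply Finset.sum_nonneg
    intro j _
    have := hL0 (j, r-j)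
    positivity
  have hGdiffbd : ∀ t ∈ Set.Icc (0:ℝ) 1,
      |G r t - G r 0| ≤ C * ‖x - z‖^γ * t^γ := by
    intro t ht
    have hφtz : φ t - φ 0 = t • (x - z) := by rw [hφdef]; simp
    have hnφ : ‖φ t - φ 0‖^γ = t^γ * ‖x - z‖^γ := by
      rw [hφtz, norm_smul, Real.norm_eq_abs, abs_of_nonneg ht.1,
        Real.mul_rpow ht.1 (norm_nonneg _)]
    simp only [hGdef]
    rw [← Finset.sum_sub_distrib]
    have hterm : ∀ j ∈ range (r+1),
        |(r.choose j : ℝ) * A j (r-j) t * h0^j * h1^(r-j)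
          - (r.choose j : ℝ) * A j (r-j) 0 * h0^j * h1^(r-j)|
        ≤ ((r.choose j : ℝ) * L (j, r-j) * |h0|^j * |h1|^(r-j)) * (‖x - z‖^γ * t^γ) := by
      intro j hj
      have hj' : j ≤ r := by simp only [Finset.mem_range] at hj; omega
      have hhol := hHolder (j, r-j) (by simp; omega) (φ t) (hφmem t ht) (φ 0)
        (hφmem 0 (by norm_num))
      have hAd : |A j (r-j) t - A j (r-j) 0| ≤ L (j, r-j) * (t^γ * ‖x - z‖^γ) := by
        simp only [hAdef]
        calc |pdIter (j, r-j) f (φ t) - pdIter (j, r-j) f (φ 0)|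
            ≤ L (j, r-j) * ‖φ t - φ 0‖^γ := hhol
          _ = L (j, r-j) * (t^γ * ‖x - z‖^γ) := by rw [hnφ]
      have hfact : (r.choose j : ℝ) * A j (r-j) t * h0^j * h1^(r-j)
          - (r.choose j : ℝ) * A j (r-j) 0 * h0^j * h1^(r-j)
          = (r.choose j : ℝ) * (A j (r-j) t - A j (r-j) 0) * h0^j * h1^(r-j) := by ring
      rw [hfact, abs_mul, abs_mul, abs_mul, abs_pow, abs_pow]
      have hch : |(r.choose j : ℝ)| = (r.choose j : ℝ) := abs_of_nonneg (by positivity)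
      rw [hch]
      have hb : (r.choose j : ℝ) * |A j (r-j) t - A j (r-j) 0|
          ≤ (r.choose j : ℝ) * (L (j, r-j) * (t^γ * ‖x - z‖^γ)) :=
        mul_le_mul_of_nonneg_left hAd (by positivity)
      calc (r.choose j : ℝ) * |A j (r-j) t - A j (r-j) 0| * |h0|^j * |h1|^(r-j)
          ≤ (r.choose j : ℝ) * (L (j, r-j) * (t^γ * ‖x - z‖^γ)) * |h0|^j * |h1|^(r-j) := by
            apply mul_le_mul_of_nonneg_right _ (by positivity)
            exact mul_le_mul_of_nonneg_right hb (by positivity)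
        _ = ((r.choose j : ℝ) * L (j, r-j) * |h0|^j * |h1|^(r-j)) * (‖x - z‖^γ * t^γ) := by
            ring
    calc |∑ j ∈ range (r+1), ((r.choose j : ℝ) * A j (r-j) t * h0^j * h1^(r-j)
            - (r.choose j : ℝ) * A j (r-j) 0 * h0^j * h1^(r-j))|
        ≤ ∑ j ∈ range (r+1), |(r.choose j : ℝ) * A j (r-j) t * h0^j * h1^(r-j)
            - (r.choose j : ℝ) * A j (r-j) 0 * h0^j * h1^(r-j)| :=
          Finset.abs_sum_le_sum_abs _ _
      _ ≤ ∑ j ∈ range (r+1), ((r.choose j : ℝ) * L (j, r-j) * |h0|^j * |h1|^(r-j))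
            * (‖x - z‖^γ * t^γ) := Finset.sum_le_sum hterm
      _ = C * ‖x - z‖^γ * t^γ := by rw [← Finset.sum_mul, ← hCdef]; ring
  -- integral estimate
  set K : ℝ := ∏ i ∈ Finset.range r, (γ + (i:ℝ) + 1) with hKdef
  have hKpos : 0 < K := by
    rw [hKdef]; apply Finset.prod_pos; intro i _; positivity
  have hmajint : IntervalIntegrable
      (fun t : ℝ => (C * ‖x - z‖^γ * (r:ℝ) / (r.factorial : ℝ)) * (t^γ * (1-t)^(r-1)))
      MeasureTheory.volume 0 1 := by
    apply Continuous.intervalIntegrable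
    exact continuous_const.mul ((rpow_cont γ hγ).mul (by fun_prop))
  have hintest : |∫ t in (0:ℝ)..1,
        (G r t - G r 0) * ((r:ℝ) * (1-t)^(r-1)) / (r.factorial : ℝ)|
      ≤ C * ‖x - z‖^γ / K := by
    have hbd : ∀ t ∈ Set.Ioc (0:ℝ) 1,
        ‖(G r t - G r 0) * ((r:ℝ) * (1-t)^(r-1)) / (r.factorial : ℝ)‖
        ≤ (C * ‖x - z‖^γ * (r:ℝ) / (r.factorial : ℝ)) * (t^γ * (1-t)^(r-1)) := by
      intro t ht
      have ht' : t ∈ Set.Icc (0:ℝ) 1 := ⟨ht.1.le, ht.2⟩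
      have h1t : (0:ℝ) ≤ 1 - t := by linarith [ht.2]
      rw [Real.norm_eq_abs, abs_div, abs_mul]
      have hfabs : |(r.factorial : ℝ)| = (r.factorial : ℝ) := abs_of_nonneg (by positivity)
      have hrabs : |(r:ℝ) * (1-t)^(r-1)| = (r:ℝ) * (1-t)^(r-1) := by
        rw [abs_of_nonneg (by positivity)]
      rw [hfabs, hrabs]
      rw [div_le_iff₀ (by positivity)]
      have := mul_le_mul_of_nonneg_right (hGdiffbd t ht') (by positivity :
        (0:ℝ) ≤ (r:ℝ) * (1-t)^(r-1))
      calc |G r t - G r 0| * ((r:ℝ) * (1-t)^(r-1))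
          ≤ C * ‖x - z‖^γ * t^γ * ((r:ℝ) * (1-t)^(r-1)) := this
        _ = (C * ‖x - z‖^γ * (r:ℝ) / (r.factorial : ℝ)) * (t^γ * (1-t)^(r-1))
            * (r.factorial : ℝ) := by
            field_simp
    have hae : ∀ᵐ t ∂(MeasureTheory.volume.restrict (Set.uIoc (0:ℝ) 1)),
        ‖(G r t - G r 0) * ((r:ℝ) * (1-t)^(r-1)) / (r.factorial : ℝ)‖
        ≤ (C * ‖x - z‖^γ * (r:ℝ) / (r.factorial : ℝ)) * (t^γ * (1-t)^(r-1)) := by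
      refine (MeasureTheory.ae_restrict_iff' measurableSet_uIoc).mpr
        (MeasureTheory.ae_of_all _ (fun t ht => ?_))
      rw [Set.uIoc_of_le zero_le_one] at ht
      exact hbd t ht
    have hnorm := intervalIntegral.norm_integral_le_abs_of_norm_le hae hmajint
    have hval : ∫ t in (0:ℝ)..1,
        (C * ‖x - z‖^γ * (r:ℝ) / (r.factorial : ℝ)) * (t^γ * (1-t)^(r-1))
        = C * ‖x - z‖^γ / K := by
      rw [intervalIntegral.integral_const_mul]
      have hbeta := beta_eval (r-1) γ hγ
      have hre : r - 1 + 1 = r := by omega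
      rw [hre] at hbeta
      rw [hbeta]
      have hKe : ∏ i ∈ range r, (γ + 1 + (i:ℝ)) = K := by
        rw [hKdef]; apply Finset.prod_congr rfl; intro i _; ring
      rw [hKe]
      have hrf : (r.factorial : ℝ) = (r:ℝ) * ((r-1).factorial : ℝ) := by
        have : r.factorial = r * (r-1).factorial := by
          cases r with
          | zero => omega
          | succ n => simp [Nat.factorial_succ]
        rw [this]; push_cast; ring
      rw [hrf]
      have hne1 : ((r-1).factorial : ℝ) ≠ 0 := by positivity
      have hne2 : (r:ℝ) ≠ 0 := Nat.cast_ne_zero.mpr (by omega)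
      field_simp
    rw [← Real.norm_eq_abs]
    calc ‖∫ t in (0:ℝ)..1, (G r t - G r 0) * ((r:ℝ) * (1-t)^(r-1)) / (r.factorial : ℝ)‖
        ≤ |∫ t in (0:ℝ)..1,
            (C * ‖x - z‖^γ * (r:ℝ) / (r.factorial : ℝ)) * (t^γ * (1-t)^(r-1))| := hnorm
      _ = |C * ‖x - z‖^γ / K| := by rw [hval]
      _ = C * ‖x - z‖^γ / K := abs_of_nonneg (by positivity)
  -- Cauchy–Schwarz
  set S : ℝ := ∑ a ∈ (Finset.range (r + 1) ×ˢ Finset.range (r + 1)).filter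
      (fun a => a.1 + a.2 = r), (r.choose a.1 : ℝ) * L a ^ 2 with hSdef
  have hSeq : S = ∑ j ∈ range (r+1), (r.choose j : ℝ) * L (j, r-j) ^ 2 := by
    rw [hSdef, sum_pairs_eq r r le_rfl (fun a => (r.choose a.1 : ℝ) * L a ^ 2)]
  have hnormsq : ‖x - z‖^2 = h0^2 + h1^2 := by
    rw [EuclideanSpace.norm_eq, Real.sq_sqrt (by positivity), Fin.sum_univ_two]
    simp only [Real.norm_eq_abs, sq_abs, hsub0, hsub1]
  have hCS : C ≤ Real.sqrt S * ‖x - z‖^r := by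
    have hcs2 : C^2 ≤ S * (h0^2 + h1^2)^r := by
      have key := Finset.sum_mul_sq_le_sq_mul_sq (range (r+1))
        (fun j => Real.sqrt (r.choose j : ℝ) * L (j, r-j))
        (fun j => Real.sqrt (r.choose j : ℝ) * (|h0|^j * |h1|^(r-j)))
      have hCeq : C = ∑ j ∈ range (r+1),
          (Real.sqrt (r.choose j : ℝ) * L (j, r-j))
          * (Real.sqrt (r.choose j : ℝ) * (|h0|^j * |h1|^(r-j))) := by
        rw [hCdef]
        apply Finset.sum_congr rfl
        intro j _
        have : Real.sqrt (r.choose j : ℝ) * Real.sqrt (r.choose j : ℝ)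
            = (r.choose j : ℝ) := Real.mul_self_sqrt (by positivity)
        calc (r.choose j : ℝ) * L (j, r-j) * |h0|^j * |h1|^(r-j)
            = (Real.sqrt (r.choose j : ℝ) * Real.sqrt (r.choose j : ℝ))
              * L (j, r-j) * |h0|^j * |h1|^(r-j) := by rw [this]
          _ = _ := by ring
      have hsq1 : ∑ j ∈ range (r+1),
          (Real.sqrt (r.choose j : ℝ) * L (j, r-j))^2 = S := by
        rw [hSeq]
        apply Finset.sum_congr rfl
        intro j _
        rw [mul_pow, Real.sq_sqrt (by positivity)]
      have hsq2 : ∑ j ∈ range (r+1),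
          (Real.sqrt (r.choose j : ℝ) * (|h0|^j * |h1|^(r-j)))^2
          = (h0^2 + h1^2)^r := by
        have hbin := add_pow (h0^2) (h1^2) r
        rw [hbin]
        apply Finset.sum_congr rfl
        intro j hj
        rw [mul_pow, Real.sq_sqrt (by positivity)]
        have heq : (|h0|^j * |h1|^(r-j))^2 = (h0^2)^j * (h1^2)^(r-j) := by
          rw [mul_pow, ← pow_mul, ← pow_mul, mul_comm j 2, mul_comm (r-j) 2,
            pow_mul, pow_mul, sq_abs, sq_abs]
        rw [heq]
        ring
      rw [hCeq]
      calc (∑ j ∈ range (r+1),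
            (Real.sqrt (r.choose j : ℝ) * L (j, r-j))
            * (Real.sqrt (r.choose j : ℝ) * (|h0|^j * |h1|^(r-j))))^2
          ≤ (∑ j ∈ range (r+1), (Real.sqrt (r.choose j : ℝ) * L (j, r-j))^2)
            * ∑ j ∈ range (r+1),
              (Real.sqrt (r.choose j : ℝ) * (|h0|^j * |h1|^(r-j)))^2 := key
        _ = S * (h0^2 + h1^2)^r := by rw [hsq1, hsq2]
    have hrhs : Real.sqrt S * ‖x - z‖^r = Real.sqrt (S * (h0^2 + h1^2)^r) := by
      have hS0 : 0 ≤ S := by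
        rw [hSeq]; apply Finset.sum_nonneg; intro j _
        have := hL0 (j, r-j); positivity
      rw [Real.sqrt_mul hS0]
      congr 1
      rw [← hnormsq, ← pow_mul, mul_comm 2 r, pow_mul, Real.sqrt_sq (by positivity)]
    rw [hrhs]
    calc C = Real.sqrt (C^2) := by rw [Real.sqrt_sq hC0]
      _ ≤ Real.sqrt (S * (h0^2 + h1^2)^r) := Real.sqrt_le_sqrt hcs2
  -- final combination
  rw [hTaylor, hrem]
  have hfinal : C * ‖x - z‖^γ / K
      ≤ (1 / K) * Real.sqrt S * ‖x - z‖ ^ ((r:ℝ) + γ) := by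
    have hpow : ‖x - z‖ ^ ((r:ℝ) + γ) = ‖x - z‖^r * ‖x - z‖^γ := by
      rw [Real.rpow_add' (norm_nonneg _) (by positivity)]
      rw [Real.rpow_natCast]
    rw [hpow]
    rw [div_le_iff₀ hKpos]
    have h1 : C * ‖x - z‖^γ ≤ (Real.sqrt S * ‖x - z‖^r) * ‖x - z‖^γ :=
      mul_le_mul_of_nonneg_right hCS (by positivity)
    calc C * ‖x - z‖^γ ≤ (Real.sqrt S * ‖x - z‖^r) * ‖x - z‖^γ := h1
      _ = (1 / K) * Real.sqrt S * (‖x - z‖^r * ‖x - z‖^γ) * K := by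
          field_simp
  exact le_trans hintest hfinal
end

section
/- Scaling of the fault indicator: let z ∈ ℝ², centers x₁,…,x_N ≠ z, and vector weights wⱼ exact for the gradient on affine functions at z. For h > 0 let yⱼ := z + h(xⱼ − z) and wⱼ^h := wⱼ / h. Then the denominator of the fault indicator scales as ‖∑ⱼ |wⱼ^h| ‖yⱼ − z‖₂‖₂ = ‖∑ⱼ |wⱼ| ‖xⱼ − z‖₂‖₂ (independent of h), while for a function f that is constant equal to a at the points yⱼ with j ∈ J⁺ and constant equal to b at points yⱼ with j ∈ J⁻ (a ≠ b, W := ∑_{j∈J⁺} wⱼ ≠ 0, J⁺ ∪ J⁻ = {1,…,N}), the numerator satisfies ‖∑ⱼ wⱼ^h f(yⱼ)‖₂ = |a−b| ‖W‖₂ / h. Hence the fault indicator I_∇ evaluated on the scaled configuration equals (|a−b| ‖W‖₂ / ‖∑ⱼ |wⱼ| ‖xⱼ−z‖₂‖₂) · h^{-1}, which tends to +∞ as h → 0⁺. -/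
open Finset Filter

/-- scaling of the fault indicator. With scaled centers `yⱼ = z + h(xⱼ−z)`
and scaled weights `wⱼ/h`, the indicator denominator is independent of `h`, the numerator
for a two-valued `f` equals `|a−b| ‖W‖₂ / h`, the indicator equals
`(|a−b| ‖W‖₂ / ‖∑ⱼ |wⱼ| ‖xⱼ−z‖₂‖₂) h⁻¹`, and this tends to `+∞` as `h → 0⁺`. -/
theorem stmt_17 {N : ℕ} (z : EuclideanSpace ℝ (Fin 2)) (x : Fin N → EuclideanSpace ℝ (Fin 2))
    (hxz : ∀ j, x j ≠ z) (w : Fin N → EuclideanSpace ℝ (Fin 2))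
    (hexact : ∀ a : ℝ, ∀ b : Fin 2 → ℝ, ∀ m : Fin 2,
      ∑ j, w j m * (a + b 0 * x j 0 + b 1 * x j 1) = b m)
    (h : ℝ) (hh : 0 < h)
    (y : Fin N → EuclideanSpace ℝ (Fin 2)) (hy : ∀ j, y j = z + h • (x j - z))
    (wh : Fin N → EuclideanSpace ℝ (Fin 2)) (hwh : ∀ j, wh j = h⁻¹ • w j)
    (Jplus : Finset (Fin N)) (a b : ℝ) (hab : a ≠ b)
    (W : EuclideanSpace ℝ (Fin 2)) (hWdef : W = ∑ j ∈ Jplus, w j) (hW : W ≠ 0)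
    (f : EuclideanSpace ℝ (Fin 2) → ℝ)
    (hfa : ∀ j ∈ Jplus, f (y j) = a) (hfb : ∀ j ∉ Jplus, f (y j) = b)
    (denx deny : EuclideanSpace ℝ (Fin 2))
    (hdenx : ∀ m, denx m = ∑ j, |w j m| * ‖x j - z‖)
    (hdeny : ∀ m, deny m = ∑ j, |wh j m| * ‖y j - z‖)
    (hden0 : ‖denx‖ ≠ 0) :
    ‖deny‖ = ‖denx‖ ∧
    ‖∑ j, f (y j) • wh j‖ = |a - b| * ‖W‖ / h ∧
    ‖∑ j, f (y j) • wh j‖ / ‖deny‖ = (|a - b| * ‖W‖ / ‖denx‖) * h⁻¹ ∧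
    Tendsto (fun s : ℝ => (|a - b| * ‖W‖ / ‖denx‖) * s⁻¹) (nhdsWithin 0 (Set.Ioi 0))
      atTop := by
  have hh0 : h ≠ 0 := ne_of_gt hh
  -- sum of weights is zero componentwise
  have sumw : ∀ m : Fin 2, ∑ j, w j m = 0 := by
    intro m
    have := hexact 1 0 m
    simpa using this
  have sumwv : ∑ j, w j = 0 := by
    ext m
    rw [WithLp.ofLp_sum, Finset.sum_apply]
    simpa using sumw m
  -- deny = denx
  have hdd : deny = denx := by
    ext m
    rw [hdeny m, hdenx m]
    apply Finset.sum_congr rfl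
    intro j _
    have h1 : wh j m = h⁻¹ * w j m := by rw [hwh j]; rfl
    have h2 : y j - z = h • (x j - z) := by rw [hy j]; abel
    rw [h1, h2, norm_smul, abs_mul, Real.norm_eq_abs,
      abs_of_pos hh, abs_of_pos (inv_pos.mpr hh)]
    field_simp
  have key1 : ‖deny‖ = ‖denx‖ := by rw [hdd]
  -- numerator
  have hnum : ∑ j, f (y j) • wh j = h⁻¹ • ((a - b) • W) := by
    have : ∑ j, f (y j) • wh j = h⁻¹ • ∑ j, f (y j) • w j := by
      rw [Finset.smul_sum]
      apply Finset.sum_congr rfl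
      intro j _
      rw [hwh j, smul_comm]
    rw [this]
    congr 1
    rw [← Finset.sum_filter_add_sum_filter_not Finset.univ (· ∈ Jplus)]
    have e1 : ∑ j ∈ Finset.univ.filter (· ∈ Jplus), f (y j) • w j = a • W := by
      rw [hWdef]
      rw [Finset.filter_mem_eq_inter, Finset.univ_inter, Finset.smul_sum]
      exact Finset.sum_congr rfl fun j hj => by rw [hfa j hj]
    have e2 : ∑ j ∈ Finset.univ.filter (¬ · ∈ Jplus), f (y j) • w j = b • (-W) := by
      have : ∑ j ∈ Finset.univ.filter (¬ · ∈ Jplus), f (y j) • w j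
          = b • ∑ j ∈ Finset.univ.filter (¬ · ∈ Jplus), w j := by
        rw [Finset.smul_sum]
        exact Finset.sum_congr rfl fun j hj => by
          rw [hfb j (by simpa using (Finset.mem_filter.mp hj).2)]
      rw [this]
      congr 1
      have := Finset.sum_filter_add_sum_filter_not Finset.univ (· ∈ Jplus) w
      rw [sumwv] at this
      have e3 : ∑ j ∈ Finset.univ.filter (· ∈ Jplus), w j = W := by
        rw [hWdef, Finset.filter_mem_eq_inter, Finset.univ_inter]
      rw [e3] at this
      exact eq_neg_of_add_eq_zero_right this
    rw [e1, e2, smul_neg, sub_smul]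
    abel
  have key2 : ‖∑ j, f (y j) • wh j‖ = |a - b| * ‖W‖ / h := by
    rw [hnum, norm_smul, norm_smul, Real.norm_eq_abs, Real.norm_eq_abs,
      abs_of_pos (inv_pos.mpr hh)]
    ring
  refine ⟨key1, key2, ?_, ?_⟩
  · rw [key1, key2]
    rw [div_div, ← div_eq_mul_inv, div_div, mul_comm h ‖denx‖]
  · have hab' : |a - b| > 0 := abs_pos.mpr (sub_ne_zero.mpr hab)
    have hW' : ‖W‖ > 0 := norm_pos_iff.mpr hW
    have hd : ‖denx‖ > 0 := lt_of_le_of_ne (norm_nonneg _) (Ne.symm hden0)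
    exact Tendsto.const_mul_atTop (by positivity) tendsto_inv_nhdsGT_zero
end
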